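/- Let k ≥ 2 be an integer and 0 < δ ≤ 1, and suppose N ∈ ℕ has the property that for every finite subset L of ℕ with |L| ≥ N and every A ⊆ [k]^{<ℕ} satisfying dens_{[k]^ℓ}(A) ≥ δ for every ℓ ∈ L, the set A contains a Carlson–Simpson line of [k]^{<ℕ}. Then for every n ≥ N, every subset A of [k]^n with |A| ≥ δ k^n contains a combinatorial line of [k]^n. -/

import Mathlib

/-- A word over `k`: a finite sequence with values in `[k]`. -/
abbrev Word (k : ℕ) := List (Fin k)

/-- A "possibly variable" letter sequence: `none` plays the role of the variable `v`. -/
abbrev VWord (k : ℕ) := List (Option (Fin k))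

/-- Substitution of the letter `a` for every occurrence of the variable. -/
def subst {k : ℕ} (w : VWord k) (a : Fin k) : Word k := w.map (fun o => o.getD a)

/-- `w` is a variable word: the variable `v` occurs in it. -/
def IsVar {k : ℕ} (w : VWord k) : Prop := none ∈ w

/-- `w` is a left variable word: its leftmost letter is the variable `v`. -/
def IsLeftVar {k : ℕ} (w : VWord k) : Prop := w.head? = some none

/-- The density `dens_{[k]^n}(A) = |A ∩ [k]^n| / k^n`. -/
noncomputable def dens (k n : ℕ) (A : Set (Word k)) : ℝ :=
  (Set.ncard {x ∈ A | x.length = n} : ℝ) / (k : ℝ) ^ n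

lemma card_words (k j : ℕ) : Set.ncard {l : Word k | l.length = j} = k ^ j := by
  rw [← Nat.card_coe_set_eq]
  have e : {l : Word k // l ∈ {l : Word k | l.length = j}} ≃ (Fin j → Fin k) :=
    Equiv.vectorEquivFin (Fin k) j
  rw [Nat.card_congr e]
  simp [Nat.card_eq_fintype_card]

lemma subst_length {k : ℕ} (w : VWord k) (a : Fin k) : (subst w a).length = w.length :=
  List.length_map _


/-- Proposition 11.13: `DHJ(k, δ) ≤ DCS(k, 1, δ)`.  If `N` has the defining property of
`DCS(k,1,δ)` (every `A ⊆ [k]^{<ℕ}` which is `δ`-dense on a finite set of at least `N`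
levels contains a Carlson–Simpson line), then every `A ⊆ [k]^n` with `n ≥ N` and
`|A| ≥ δ kⁿ` contains a combinatorial line of `[k]^n`. -/
theorem dhj_le_dcs (k : ℕ) (hk : 2 ≤ k) (δ : ℝ) (hδ0 : 0 < δ) (hδ1 : δ ≤ 1) (N : ℕ)
    (hN : ∀ L : Finset ℕ, N ≤ L.card → ∀ A : Set (Word k),
      (∀ ℓ ∈ L, δ ≤ dens k ℓ A) →
      ∃ (c : Word k) (w : VWord k), IsLeftVar w ∧
        insert c {x | ∃ a : Fin k, x = c ++ subst w a} ⊆ A) :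
    ∀ n : ℕ, N ≤ n → ∀ A : Set (Word k), (∀ x ∈ A, x.length = n) →
      δ * (k : ℝ) ^ n ≤ (Set.ncard A : ℝ) →
      ∃ w : VWord k, IsVar w ∧ w.length = n ∧
        {x | ∃ a : Fin k, x = subst w a} ⊆ A := by
  intro n hn A hA hcard
  classical
  set A' : Set (Word k) :=
    {y | n ≤ y.length ∧ y.length < n + N ∧ y.drop (y.length - n) ∈ A} with hA'def
  have hk0 : (0:ℝ) < (k:ℝ) := by
    have : (0:ℕ) < k := by omega
    exact_mod_cast this
  -- density of A' at each level in [n, n+N)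
  have hdens : ∀ ℓ ∈ Finset.Ico n (n + N), δ ≤ dens k ℓ A' := by
    intro ℓ hℓ
    rw [Finset.mem_Ico] at hℓ
    obtain ⟨h1, h2⟩ := hℓ
    have hT : {x ∈ A' | x.length = ℓ} =
        (fun p : Word k × Word k => p.1 ++ p.2) '' ({l : Word k | l.length = ℓ - n} ×ˢ A) := by
      ext x
      constructor
      · rintro ⟨⟨hx1, hx2, hx3⟩, hx4⟩
        refine ⟨(x.take (ℓ - n), x.drop (ℓ - n)), ⟨?_, ?_⟩, ?_⟩
        · simp only [Set.mem_setOf_eq, List.length_take]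
          omega
        · rw [hx4] at hx3; exact hx3
        · simp
      · rintro ⟨⟨p, q⟩, ⟨hp, hq⟩, rfl⟩
        simp only [Set.mem_setOf_eq] at hp hq
        show (p ++ q) ∈ {x ∈ A' | x.length = ℓ}
        have hqlen := hA q hq
        have hlen : (p ++ q).length = ℓ := by
          simp only [List.length_append, hp, hqlen]; omega
        refine ⟨⟨by omega, by omega, ?_⟩, hlen⟩
        have : (p ++ q).length - n = p.length := by omega
        rw [hlen, show ℓ - n = p.length from by omega, List.drop_left]
        exact hq
    have hinj : Set.InjOn (fun p : Word k × Word k => p.1 ++ p.2)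
        ({l : Word k | l.length = ℓ - n} ×ˢ A) := by
      rintro ⟨p1, q1⟩ ⟨hp1, _⟩ ⟨p2, q2⟩ ⟨hp2, _⟩ h
      simp only [Set.mem_setOf_eq] at hp1 hp2 h
      obtain ⟨h1', h2'⟩ := List.append_inj h (by rw [hp1, hp2])
      simp [h1', h2']
    have hcount : ({x ∈ A' | x.length = ℓ}).ncard = k ^ (ℓ - n) * A.ncard := by
      rw [hT, Set.ncard_image_of_injOn hinj, ← Nat.card_coe_set_eq,
        Nat.card_congr (Equiv.Set.prod _ _), Nat.card_prod,
        Nat.card_coe_set_eq, Nat.card_coe_set_eq, card_words]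
    rw [dens, hcount]
    have hpow : (k:ℝ) ^ ℓ = (k:ℝ) ^ (ℓ - n) * (k:ℝ) ^ n := by
      rw [← pow_add]; congr 1; omega
    push_cast
    rw [hpow, mul_div_mul_left _ _ (by positivity : ((k:ℝ) ^ (ℓ - n)) ≠ 0)]
    rw [le_div_iff₀ (by positivity)]
    exact hcard
  obtain ⟨c, w, hw, hsub⟩ := hN (Finset.Ico n (n + N)) (by rw [Nat.card_Ico]; omega) A' hdens
  -- w starts with none
  obtain ⟨w', rfl⟩ : ∃ w', w = none :: w' := by
    cases w with
    | nil => simp [IsLeftVar] at hw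
    | cons h t =>
      rw [IsLeftVar, List.head?_cons, Option.some_inj] at hw
      exact ⟨t, by rw [hw]⟩
  have hc : c ∈ A' := hsub (Set.mem_insert _ _)
  have hy : ∀ a : Fin k, (c ++ subst (none :: w') a) ∈ A' := fun a =>
    hsub (Set.mem_insert_iff.mpr (Or.inr ⟨a, rfl⟩))
  obtain ⟨hc1, hc2, _⟩ := hc
  set w : VWord k := none :: w' with hwdef
  have hwlen : ∀ a : Fin k, (c ++ subst w a).length = c.length + w.length := fun a => by
    rw [List.length_append, subst_length]
  have a0 : Fin k := ⟨0, by omega⟩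
  have hy0 := hy a0
  obtain ⟨hl1, hl2, _⟩ := hy0
  rw [hwlen a0] at hl1 hl2
  set m : ℕ := c.length + w.length - n with hmdef
  have hwn : w.length ≤ n := by
    have : 0 < w.length := by simp [hwdef]
    omega
  have hmc : m ≤ c.length := by omega
  refine ⟨(c.map some ++ w).drop m, ?_, ?_, ?_⟩
  · rw [IsVar, List.drop_append_of_le_length (by rw [List.length_map]; exact hmc)]
    exact List.mem_append_right _ List.mem_cons_self
  · rw [List.length_drop, List.length_append, List.length_map]; omega
  · rintro x ⟨a, rfl⟩
    have hs : subst ((c.map some ++ w).drop m) a = (c ++ subst w a).drop m := by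
      rw [subst, List.map_drop, List.map_append, List.map_map]
      congr 1 <;> simp [Function.comp_def, subst]
    rw [hs]
    have hya := hy a
    obtain ⟨_, _, hya3⟩ := hya
    rw [hwlen a] at hya3
    exact hya3
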